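/- arXiv:1205.5543 — 2 statements merged into one kernel-verified Lean document; each statement's English description precedes it below -/
import Mathlib

section
/- For an exponential staircase rank one construction of type I with frequencies ω_n(j) = (m_n/ε_n²)·p_n·exp(ε_n·j/p_n), and for every s ∈ (0,1], ∫_ℝ ( (2/p_n)·Σ_{j=0}^{p_n−1} cos²(ω_n(j)·t) − 1 )² dμ_s(t) → 0 as n → ∞. -/
open MeasureTheory Filter Topology Finset
open scoped NNReal ENNReal

/-- The Fejér-type kernel `K_s(θ) = (s/(2π))·(sin(sθ/2)/(sθ/2))²`, with `K_s(0) = s/(2π)`. -/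
noncomputable def Ks (s θ : ℝ) : ℝ :=
  (s / (2 * Real.pi)) * (if θ = 0 then 1 else (Real.sin (s * θ / 2) / (s * θ / 2)) ^ 2)

/-- The measure `μ_s` on `ℝ` with density `K_s` with respect to Lebesgue measure. -/
noncomputable def mus (s : ℝ) : Measure ℝ :=
  (volume : Measure ℝ).withDensity fun θ => ENNReal.ofReal (Ks s θ)

/-- The frequencies `ω_n(j) = (m_n/ε_n²)·p_n·exp(ε_n·j/p_n)` of an exponential staircase
rank one construction of type I. -/
noncomputable def staircaseOmega (m p : ℕ → ℕ) (ε : ℕ → ℚ) (n j : ℕ) : ℝ :=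
  ((m n : ℝ) / (ε n : ℝ) ^ 2) * (p n : ℝ) * Real.exp ((ε n : ℝ) * (j : ℝ) / (p n : ℝ))

/-- The polynomials `P_n(θ) = p_n^{-1/2}·Σ_{j=0}^{p_n-1} exp(iθ(ω_n(j) − ω_n(0)))` of an
exponential staircase rank one construction of type I. -/
noncomputable def staircaseP (m p : ℕ → ℕ) (ε : ℕ → ℚ) (n : ℕ) (θ : ℝ) : ℂ :=
  (1 / Real.sqrt (p n) : ℝ) * ∑ j ∈ Finset.range (p n),
    Complex.exp (Complex.I * (θ : ℂ) *
      ((staircaseOmega m p ε n j - staircaseOmega m p ε n 0 : ℝ) : ℂ))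


lemma Ks_nonneg {s : ℝ} (hs : 0 < s) (θ : ℝ) : 0 ≤ Ks s θ := by
  unfold Ks
  apply mul_nonneg (div_nonneg hs.le (by positivity))
  split <;> positivity

lemma Ks_meas (s : ℝ) : Measurable (Ks s) := by
  unfold Ks
  apply Measurable.const_mul
  exact Measurable.ite (measurableSet_eq) measurable_const (by fun_prop)

lemma Ks_le {s : ℝ} (hs : 0 < s) (θ : ℝ) :
    Ks s θ ≤ (s / (2 * Real.pi) + 2 / (Real.pi * s)) * (1 + θ ^ 2)⁻¹ := by
  have hπ := Real.pi_pos
  have hA : 0 < s / (2 * Real.pi) := by positivity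
  have hB : 0 < 2 / (Real.pi * s) := by positivity
  rcases eq_or_ne θ 0 with h0 | h0
  · subst h0
    simp only [Ks, if_pos rfl]
    norm_num
    nlinarith
  · have key : Ks s θ * (1 + θ ^ 2) ≤ s / (2 * Real.pi) + 2 / (Real.pi * s) := by
      have h1 : Ks s θ ≤ s / (2 * Real.pi) := by
        unfold Ks
        rw [if_neg h0]
        have : (Real.sin (s * θ / 2) / (s * θ / 2)) ^ 2 ≤ 1 := by
          rw [div_pow, div_le_one (by positivity)]
          exact Real.sin_sq_le_sq
        nlinarith
      have h2 : Ks s θ * θ ^ 2 ≤ 2 / (Real.pi * s) := by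
        unfold Ks
        rw [if_neg h0]
        have hsin : (Real.sin (s * θ / 2)) ^ 2 ≤ 1 := by
          have := Real.neg_one_le_sin (s * θ / 2)
          have := Real.sin_le_one (s * θ / 2)
          nlinarith
        have hθ2 : (0:ℝ) < θ ^ 2 := by positivity
        rw [div_pow]
        rw [show s / (2 * Real.pi) * (Real.sin (s*θ/2)^2 / (s*θ/2)^2) * θ^2
          = Real.sin (s*θ/2)^2 * (s / (2*Real.pi) * θ^2 / (s*θ/2)^2) by ring]
        have : s / (2*Real.pi) * θ^2 / (s*θ/2)^2 = 2 / (Real.pi * s) := by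
          field_simp
        rw [this]
        nlinarith
      nlinarith [Ks_nonneg hs θ]
    have h1p : (0:ℝ) < 1 + θ ^ 2 := by positivity
    rw [← div_eq_mul_inv, le_div_iff₀ h1p]
    exact key

lemma Ks_integrable {s : ℝ} (hs : 0 < s) : Integrable (Ks s) := by
  have hint : Integrable (fun θ : ℝ => (s / (2 * Real.pi) + 2 / (Real.pi * s)) * (1 + θ ^ 2)⁻¹) :=
    integrable_inv_one_add_sq.const_mul _
  refine hint.mono' (Ks_meas s).aestronglyMeasurable ?_
  filter_upwards with θ
  rw [Real.norm_eq_abs, abs_of_nonneg (Ks_nonneg hs θ)]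
  exact Ks_le hs θ

lemma cosKs_integrable {s : ℝ} (hs : 0 < s) (u : ℝ) :
    Integrable (fun θ => Real.cos (u * θ) * Ks s θ) := by
  refine (Ks_integrable hs).mono'
    (((Real.continuous_cos.comp (continuous_const.mul continuous_id)).measurable.mul
      (Ks_meas s)).aestronglyMeasurable) ?_
  filter_upwards with θ
  rw [Real.norm_eq_abs, abs_mul]
  calc |Real.cos (u * θ)| * |Ks s θ| ≤ 1 * |Ks s θ| :=
        mul_le_mul_of_nonneg_right (Real.abs_cos_le_one _) (abs_nonneg _)
    _ = Ks s θ := by rw [one_mul, abs_of_nonneg (Ks_nonneg hs θ)]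

noncomputable def Fc (s u : ℝ) : ℝ := ∫ θ, Real.cos (u * θ) * Ks s θ

lemma Fc_abs_le {s : ℝ} (hs : 0 < s) (u : ℝ) : |Fc s u| ≤ ∫ θ, Ks s θ := by
  have h1 : |Fc s u| ≤ ∫ θ, ‖Real.cos (u * θ) * Ks s θ‖ := by
    rw [← Real.norm_eq_abs]
    exact norm_integral_le_integral_norm _
  refine h1.trans (integral_mono (cosKs_integrable hs u).norm (Ks_integrable hs) ?_)
  intro θ
  dsimp only
  rw [Real.norm_eq_abs, abs_mul]
  calc |Real.cos (u * θ)| * |Ks s θ| ≤ 1 * |Ks s θ| :=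
        mul_le_mul_of_nonneg_right (Real.abs_cos_le_one _) (abs_nonneg _)
    _ = Ks s θ := by rw [one_mul, abs_of_nonneg (Ks_nonneg hs θ)]

lemma Fc_even {s : ℝ} (u : ℝ) : Fc s (-u) = Fc s u := by
  unfold Fc
  congr 1
  ext θ
  rw [neg_mul, Real.cos_neg]

lemma expKs_integrable {s : ℝ} (hs : 0 < s) (w : ℝ) :
    Integrable (fun v : ℝ => Real.fourierChar (-(v * w)) • ((Ks s v : ℂ))) := by
  have h : Integrable (fun v : ℝ => ((Ks s v : ℂ))) := (Ks_integrable hs).ofReal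
  have he : (fun v : ℝ => Real.fourierChar (-(v * w)) • ((Ks s v : ℂ)))
      = fun v : ℝ => ((Real.fourierChar (-(v * w)) : Circle) : ℂ) * ((Ks s v : ℂ)) := by
    ext v; rw [Circle.smul_def, smul_eq_mul]
  rw [he]
  refine h.bdd_mul (c := 1) (Continuous.aestronglyMeasurable (by continuity)) ?_
  filter_upwards with v
  exact (Circle.norm_coe _).le

lemma Fc_re {s : ℝ} (hs : 0 < s) (w : ℝ) :
    (∫ v : ℝ, Real.fourierChar (-(v * w)) • ((Ks s v : ℂ))).re = Fc s (2 * Real.pi * w) := by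
  rw [show (∫ v : ℝ, Real.fourierChar (-(v * w)) • ((Ks s v : ℂ))).re
      = RCLike.re (∫ v : ℝ, Real.fourierChar (-(v * w)) • ((Ks s v : ℂ))) from rfl,
    ← integral_re (expKs_integrable hs w)]
  unfold Fc
  congr 1
  ext v
  rw [show (RCLike.re (Real.fourierChar (-(v * w)) • ((Ks s v : ℂ)) : ℂ) : ℝ)
      = (Real.fourierChar (-(v * w)) • ((Ks s v : ℂ)) : ℂ).re from rfl]
  rw [Circle.smul_def, Real.fourierChar_apply, smul_eq_mul]
  rw [Complex.mul_re]
  simp only [Complex.exp_ofReal_mul_I_re, Complex.ofReal_re, Complex.ofReal_im, mul_zero, sub_zero]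
  rw [show (2 * Real.pi * -(v * w)) = -(2 * Real.pi * (v * w)) by ring, Real.cos_neg]
  ring_nf

lemma Fc_cocompact {s : ℝ} (hs : 0 < s) : Tendsto (Fc s) (cocompact ℝ) (𝓝 0) := by
  have H := Real.tendsto_integral_exp_smul_cocompact (fun v : ℝ => ((Ks s v : ℂ)))
  have hre : Tendsto (fun w : ℝ =>
      (∫ v : ℝ, Real.fourierChar (-(v * w)) • ((Ks s v : ℂ))).re) (cocompact ℝ) (𝓝 0) := by
    simpa [Function.comp_def] using (Complex.continuous_re.tendsto 0).comp H
  have h2π : ((2 * Real.pi)⁻¹ : ℝ) ≠ 0 := by positivity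
  have hcomp := hre.comp
    ((Homeomorph.mulRight₀ ((2 * Real.pi)⁻¹) h2π).toCocompactMap.cocompact_tendsto')
  refine hcomp.congr fun u => ?_
  show (∫ v : ℝ, Real.fourierChar (-(v * (u * (2 * Real.pi)⁻¹))) • ((Ks s v : ℂ))).re = Fc s u
  rw [Fc_re hs]
  congr 1
  field_simp

lemma coscosKs_integrable {s : ℝ} (hs : 0 < s) (a b : ℝ) :
    Integrable (fun t => Real.cos (a * t) * Real.cos (b * t) * Ks s t) := by
  refine (Ks_integrable hs).mono'
    ((((Real.continuous_cos.comp (continuous_const.mul continuous_id)).mul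
      (Real.continuous_cos.comp (continuous_const.mul continuous_id))).measurable.mul
      (Ks_meas s)).aestronglyMeasurable) ?_
  filter_upwards with t
  rw [Real.norm_eq_abs, abs_mul, abs_mul]
  calc |Real.cos (a * t)| * |Real.cos (b * t)| * |Ks s t| ≤ 1 * 1 * |Ks s t| := by
        apply mul_le_mul_of_nonneg_right _ (abs_nonneg _)
        exact mul_le_mul (Real.abs_cos_le_one _) (Real.abs_cos_le_one _) (abs_nonneg _) zero_le_one
    _ = Ks s t := by rw [one_mul, one_mul, abs_of_nonneg (Ks_nonneg hs t)]

lemma coscos_int {s : ℝ} (hs : 0 < s) (a b : ℝ) :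
    ∫ t, Real.cos (a * t) * Real.cos (b * t) * Ks s t
      = (Fc s (a - b) + Fc s (a + b)) / 2 := by
  have hpt : ∀ t, Real.cos (a * t) * Real.cos (b * t) * Ks s t
      = (Real.cos ((a - b) * t) * Ks s t + Real.cos ((a + b) * t) * Ks s t) / 2 := by
    intro t
    rw [show (a - b) * t = a * t - b * t by ring, show (a + b) * t = a * t + b * t by ring,
      Real.cos_add, Real.cos_sub]
    ring
  simp_rw [hpt]
  rw [integral_div, integral_add (cosKs_integrable hs _) (cosKs_integrable hs _)]
  rfl

lemma sum_cos_integral {s : ℝ} (hs : 0 < s) (P : ℕ) (hP : 0 < P) (ω : ℕ → ℝ) :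
    (∫ t, ((2 / (P : ℝ)) * ∑ j ∈ Finset.range P, Real.cos (ω j * t) ^ 2 - 1) ^ 2 ∂(mus s))
    = (1 / (P : ℝ) ^ 2) * ∑ j ∈ Finset.range P, ∑ k ∈ Finset.range P,
        (Fc s (2 * ω j - 2 * ω k) + Fc s (2 * ω j + 2 * ω k)) / 2 := by
  have hPne : (P : ℝ) ≠ 0 := Nat.cast_ne_zero.mpr hP.ne'
  rw [mus, show (fun θ => ENNReal.ofReal (Ks s θ)) = fun θ => (((Ks s θ).toNNReal : ℝ≥0) : ℝ≥0∞)
      from rfl, integral_withDensity_eq_integral_smul ((Ks_meas s).real_toNNReal)]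
  have hpt : ∀ t : ℝ, (Ks s t).toNNReal •
      (((2 / (P : ℝ)) * ∑ j ∈ Finset.range P, Real.cos (ω j * t) ^ 2 - 1) ^ 2)
      = (1 / (P : ℝ) ^ 2) * ∑ j ∈ Finset.range P, ∑ k ∈ Finset.range P,
          Real.cos (2 * ω j * t) * Real.cos (2 * ω k * t) * Ks s t := by
    intro t
    rw [NNReal.smul_def, smul_eq_mul, Real.coe_toNNReal _ (Ks_nonneg hs t)]
    have h1 : (2 / (P : ℝ)) * ∑ j ∈ Finset.range P, Real.cos (ω j * t) ^ 2 - 1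
        = (1 / (P : ℝ)) * ∑ j ∈ Finset.range P, Real.cos (2 * ω j * t) := by
      have : ∀ j ∈ Finset.range P, Real.cos (ω j * t) ^ 2
          = 1 / 2 + Real.cos (2 * ω j * t) / 2 := by
        intro j _
        rw [show 2 * ω j * t = 2 * (ω j * t) by ring]
        exact Real.cos_sq _
      rw [Finset.sum_congr rfl this, Finset.sum_add_distrib, Finset.sum_const, card_range,
        nsmul_eq_mul, ← Finset.sum_div]
      field_simp
      ring_nf
      simp only [mul_comm t]
    have hsq : (∑ j ∈ Finset.range P, Real.cos (2 * ω j * t)) ^ 2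
        = ∑ j ∈ Finset.range P, ∑ k ∈ Finset.range P,
            Real.cos (2 * ω j * t) * Real.cos (2 * ω k * t) := by
      rw [pow_two, Finset.sum_mul_sum]
    rw [h1, mul_pow, hsq, show ((1:ℝ)/(P:ℝ))^2 = 1/(P:ℝ)^2 by ring, mul_left_comm]
    congr 1
    rw [Finset.mul_sum]
    refine Finset.sum_congr rfl fun j _ => ?_
    rw [Finset.mul_sum]
    refine Finset.sum_congr rfl fun k _ => ?_
    ring
  simp_rw [hpt]
  rw [integral_const_mul]
  congr 1
  rw [integral_finset_sum _ fun j _ => (integrable_finset_sum _ fun k _ =>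
    coscosKs_integrable hs (2 * ω j) (2 * ω k))]
  refine Finset.sum_congr rfl fun j _ => ?_
  rw [integral_finset_sum _ fun k _ => coscosKs_integrable hs (2 * ω j) (2 * ω k)]
  exact Finset.sum_congr rfl fun k _ => coscos_int hs _ _

set_option maxHeartbeats 1000000 in
/-- for an exponential staircase rank one construction of type I,
`∫ ((2/p_n)·Σ_j cos²(ω_n(j)t) − 1)² dμ_s → 0`. -/
theorem staircase_cos_sq_variance
    (m p : ℕ → ℕ) (ε : ℕ → ℚ) (h : ℕ → ℝ)
    (hm : ∀ n, 0 < m n) (hp : ∀ n, 0 < p n) (hε : ∀ n, 0 < ε n)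
    (hmtop : Tendsto m atTop atTop) (hptop : Tendsto p atTop atTop)
    (hε0 : Tendsto (fun n => (ε n : ℝ)) atTop (nhds 0))
    (hh0 : h 0 = 1)
    (hspacer_nonneg : ∀ n, ∀ q < p n,
      0 ≤ staircaseOmega m p ε n (q + 1) - staircaseOmega m p ε n q - h n)
    (hh : ∀ n, h (n + 1) = (p n : ℝ) * h n +
      ∑ q ∈ Finset.range (p n),
        (staircaseOmega m p ε n (q + 1) - staircaseOmega m p ε n q - h n))
    (hcond1 : ∀ n, (ε n : ℝ) * h n ≤ (m n : ℝ))
    (hcond2 : Tendsto (fun n => Real.log (p n) / (m n : ℝ)) atTop (nhds 0))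
    (hcond3 : ∀ n, (p n : ℝ) < (m n : ℝ) / (ε n : ℝ) →
      Real.log (p n) / (p n : ℝ) ≤ (ε n : ℝ))
    : ∀ s : ℝ, s ∈ Set.Ioc (0 : ℝ) 1 →
      Tendsto
        (fun n => ∫ t,
          ((2 / (p n : ℝ)) * ∑ j ∈ Finset.range (p n),
              Real.cos (staircaseOmega m p ε n j * t) ^ 2 - 1) ^ 2 ∂(mus s))
        atTop (nhds 0) := by
  intro s hsIoc
  obtain ⟨hs, _hs1⟩ := hsIoc
  set M := ∫ θ, Ks s θ with hMdef
  have hM0 : 0 ≤ M := integral_nonneg fun θ => Ks_nonneg hs θ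
  rw [Metric.tendsto_atTop]
  intro η hη
  -- obtain the cutoff R beyond which |Fc s| is small
  have hFc := Fc_cocompact hs
  rw [cocompact_eq_atBot_atTop, tendsto_sup] at hFc
  obtain ⟨_hbot, htop⟩ := hFc
  rw [Metric.tendsto_atTop] at htop
  obtain ⟨R0, hR0⟩ := htop (η / 4) (by linarith)
  set R := max R0 0 with hRdef
  have hRnonneg : 0 ≤ R := le_max_right _ _
  have hRsmall : ∀ u : ℝ, R ≤ |u| → |Fc s u| < η / 4 := by
    intro u hu
    rcases le_or_gt 0 u with hu0 | hu0
    · rw [abs_of_nonneg hu0] at hu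
      have := hR0 u (le_trans (le_max_left _ _) hu)
      rwa [Real.dist_0_eq_abs] at this
    · rw [abs_of_neg hu0] at hu
      have := hR0 (-u) (le_trans (le_max_left _ _) hu)
      rwa [Real.dist_0_eq_abs, Fc_even] at this
  -- eventual conditions on n
  have h1 : ∀ᶠ n in atTop, R ≤ (m n : ℝ) :=
    (tendsto_natCast_atTop_atTop.comp hmtop).eventually_ge_atTop R
  have h2 : ∀ᶠ n in atTop, (ε n : ℝ) ≤ 1 :=
    (hε0.eventually_lt_const (by norm_num : (0:ℝ) < 1)).mono fun n hn => hn.le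
  have h3 : ∀ᶠ n in atTop, M / (p n : ℝ) < η / 2 := by
    have hp' : Tendsto (fun n => (p n : ℝ)) atTop atTop :=
      tendsto_natCast_atTop_atTop.comp hptop
    exact (Tendsto.div_atTop (tendsto_const_nhds (x := M)) hp').eventually_lt_const
      (by linarith)
  obtain ⟨N, hN⟩ := eventually_atTop.mp ((h1.and h2).and h3)
  refine ⟨N, fun n hn => ?_⟩
  obtain ⟨⟨hmR, hε1⟩, hpM⟩ := hN n hn
  set ω := staircaseOmega m p ε n with hωdef
  set P := p n with hPdef
  have hP : 0 < P := hp n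
  have hPR : (0:ℝ) < (P : ℝ) := Nat.cast_pos.mpr hP
  have hP1 : (1:ℝ) ≤ (P : ℝ) := by exact_mod_cast hP
  have hε' : (0:ℝ) < (ε n : ℝ) := by exact_mod_cast hε n
  have hm' : (0:ℝ) < (m n : ℝ) := Nat.cast_pos.mpr (hm n)
  -- lower bounds on the frequencies
  have hωlb : ∀ j : ℕ, (m n : ℝ) ≤ ω j := by
    intro j
    have hexp : 1 ≤ Real.exp ((ε n : ℝ) * (j : ℝ) / (P : ℝ)) := Real.one_le_exp (by positivity)
    have hdiv : (m n : ℝ) ≤ (m n : ℝ) / (ε n : ℝ) ^ 2 := by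
      rw [le_div_iff₀ (by positivity)]
      nlinarith [mul_nonneg (mul_nonneg hm'.le (sub_nonneg.mpr hε1))
        (by positivity : (0:ℝ) ≤ 1 + (ε n : ℝ))]
    calc (m n : ℝ) ≤ (m n : ℝ) / (ε n : ℝ) ^ 2 := hdiv
      _ ≤ (m n : ℝ) / (ε n : ℝ) ^ 2 * (P : ℝ) := le_mul_of_one_le_right (by positivity) hP1
      _ = (m n : ℝ) / (ε n : ℝ) ^ 2 * (P : ℝ) * 1 := (mul_one _).symm
      _ ≤ (m n : ℝ) / (ε n : ℝ) ^ 2 * (P : ℝ) * Real.exp ((ε n : ℝ) * (j : ℝ) / (P : ℝ)) :=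
          mul_le_mul_of_nonneg_left hexp (by positivity)
      _ = ω j := rfl
  have hωpos : ∀ j : ℕ, 0 < ω j := fun j => lt_of_lt_of_le hm' (hωlb j)
  have hgap : ∀ j k : ℕ, k < j → (m n : ℝ) ≤ ω j - ω k := by
    intro j k hkj
    set xj := (ε n : ℝ) * (j : ℝ) / (P : ℝ) with hxj
    set xk := (ε n : ℝ) * (k : ℝ) / (P : ℝ) with hxk
    have hxk0 : 0 ≤ xk := by positivity
    have hd : 0 ≤ xj - xk := by
      have hkj' : (k : ℝ) ≤ (j : ℝ) := by exact_mod_cast hkj.le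
      have : xk ≤ xj := by
        simp only [hxj, hxk]
        gcongr
      linarith
    have hek : 1 ≤ Real.exp xk := Real.one_le_exp hxk0
    have h1' : Real.exp xk * (1 + (xj - xk)) ≤ Real.exp xj := by
      calc Real.exp xk * (1 + (xj - xk)) ≤ Real.exp xk * Real.exp (xj - xk) := by
            apply mul_le_mul_of_nonneg_left _ (Real.exp_nonneg _)
            have := Real.add_one_le_exp (xj - xk)
            linarith
        _ = Real.exp xj := by rw [← Real.exp_add]; congr 1; ring
    have hexpdiff : xj - xk ≤ Real.exp xj - Real.exp xk := by nlinarith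
    have hA : (0:ℝ) < (m n : ℝ) / (ε n : ℝ) ^ 2 * (P : ℝ) := by positivity
    have hjk : (1:ℝ) ≤ (j : ℝ) - (k : ℝ) := by
      have : (k : ℝ) + 1 ≤ (j : ℝ) := by exact_mod_cast hkj
      linarith
    have hAd : (m n : ℝ) ≤ (m n : ℝ) / (ε n : ℝ) ^ 2 * (P : ℝ) * (xj - xk) := by
      have hxd : xj - xk = (ε n : ℝ) * ((j : ℝ) - (k : ℝ)) / (P : ℝ) := by
        simp only [hxj, hxk]
        field_simp
      rw [hxd, show (m n : ℝ) / (ε n : ℝ) ^ 2 * (P : ℝ) * ((ε n : ℝ) * ((j : ℝ) - (k : ℝ)) / (P : ℝ))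
          = (m n : ℝ) * ((j : ℝ) - (k : ℝ)) / (ε n : ℝ) by field_simp,
        le_div_iff₀ hε']
      nlinarith
    calc (m n : ℝ) ≤ (m n : ℝ) / (ε n : ℝ) ^ 2 * (P : ℝ) * (xj - xk) := hAd
      _ ≤ (m n : ℝ) / (ε n : ℝ) ^ 2 * (P : ℝ) * (Real.exp xj - Real.exp xk) :=
          mul_le_mul_of_nonneg_left hexpdiff hA.le
      _ = ω j - ω k := by
          simp only [hωdef, staircaseOmega, hxj, hxk, ← hPdef]
          ring
  -- rewrite the integral
  rw [Real.dist_0_eq_abs, sum_cos_integral hs P hP ω]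
  -- bound each term
  have hterm : ∀ j ∈ Finset.range P, ∀ k ∈ Finset.range P,
      |(Fc s (2 * ω j - 2 * ω k) + Fc s (2 * ω j + 2 * ω k)) / 2|
        ≤ (if j = k then M / 2 else 0) + η / 4 := by
    intro j _ k _
    have hFsum : |Fc s (2 * ω j + 2 * ω k)| < η / 4 := by
      apply hRsmall
      rw [abs_of_nonneg (by linarith [hωpos j, hωpos k] : (0:ℝ) ≤ 2 * ω j + 2 * ω k)]
      linarith [hωlb j, hωpos k, hmR]
    rcases eq_or_ne j k with rfl | hjk
    · rw [if_pos rfl]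
      have h0 : |Fc s (2 * ω j - 2 * ω j)| ≤ M := Fc_abs_le hs _
      have habs := abs_add_le (Fc s (2 * ω j - 2 * ω j)) (Fc s (2 * ω j + 2 * ω j))
      rw [abs_div, abs_two]
      have : |Fc s (2 * ω j - 2 * ω j) + Fc s (2 * ω j + 2 * ω j)| ≤ M + η / 4 := by
        linarith
      linarith
    · rw [if_neg hjk, zero_add]
      have hdiff : R ≤ |2 * ω j - 2 * ω k| := by
        rcases hjk.lt_or_gt with hlt | hlt
        · have hg := hgap k j hlt
          rw [abs_of_nonpos (by linarith : 2 * ω j - 2 * ω k ≤ 0)]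
          linarith
        · have hg := hgap j k hlt
          rw [abs_of_nonneg (by linarith : (0:ℝ) ≤ 2 * ω j - 2 * ω k)]
          linarith
      have hFdiff := hRsmall _ hdiff
      have habs := abs_add_le (Fc s (2 * ω j - 2 * ω k)) (Fc s (2 * ω j + 2 * ω k))
      rw [abs_div, abs_two]
      linarith
  -- sum the bounds
  have hsum_le : |∑ j ∈ Finset.range P, ∑ k ∈ Finset.range P,
      (Fc s (2 * ω j - 2 * ω k) + Fc s (2 * ω j + 2 * ω k)) / 2|
      ≤ (P : ℝ) * (M / 2) + (P : ℝ) ^ 2 * (η / 4) := by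
    calc |∑ j ∈ Finset.range P, ∑ k ∈ Finset.range P,
        (Fc s (2 * ω j - 2 * ω k) + Fc s (2 * ω j + 2 * ω k)) / 2|
        ≤ ∑ j ∈ Finset.range P, |∑ k ∈ Finset.range P,
            (Fc s (2 * ω j - 2 * ω k) + Fc s (2 * ω j + 2 * ω k)) / 2| :=
          Finset.abs_sum_le_sum_abs _ _
      _ ≤ ∑ j ∈ Finset.range P, ∑ k ∈ Finset.range P,
            |(Fc s (2 * ω j - 2 * ω k) + Fc s (2 * ω j + 2 * ω k)) / 2| :=
          Finset.sum_le_sum fun j _ => Finset.abs_sum_le_sum_abs _ _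
      _ ≤ ∑ j ∈ Finset.range P, ∑ k ∈ Finset.range P,
            ((if j = k then M / 2 else 0) + η / 4) :=
          Finset.sum_le_sum fun j hj => Finset.sum_le_sum (hterm j hj)
      _ = ∑ j ∈ Finset.range P, (M / 2 + (P : ℝ) * (η / 4)) := by
          refine Finset.sum_congr rfl fun j hj => ?_
          rw [Finset.sum_add_distrib, Finset.sum_const, card_range, Finset.sum_ite_eq,
            if_pos hj, nsmul_eq_mul]
      _ = (P : ℝ) * (M / 2 + (P : ℝ) * (η / 4)) := by
          rw [Finset.sum_const, card_range, nsmul_eq_mul]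
      _ = (P : ℝ) * (M / 2) + (P : ℝ) ^ 2 * (η / 4) := by ring
  rw [abs_mul, abs_of_nonneg (by positivity : (0:ℝ) ≤ 1 / (P : ℝ) ^ 2)]
  have hfinal : 1 / (P : ℝ) ^ 2 * ((P : ℝ) * (M / 2) + (P : ℝ) ^ 2 * (η / 4))
      = M / (P : ℝ) / 2 + η / 4 := by
    field_simp
  calc 1 / (P : ℝ) ^ 2 * |∑ j ∈ Finset.range P, ∑ k ∈ Finset.range P,
        (Fc s (2 * ω j - 2 * ω k) + Fc s (2 * ω j + 2 * ω k)) / 2|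
      ≤ 1 / (P : ℝ) ^ 2 * ((P : ℝ) * (M / 2) + (P : ℝ) ^ 2 * (η / 4)) :=
        mul_le_mul_of_nonneg_left hsum_le (by positivity)
    _ = M / (P : ℝ) / 2 + η / 4 := hfinal
    _ < η := by
        have : M / (P : ℝ) / 2 < η / 4 := by linarith
        linarith
end

section
/- For every real number C ≥ 1 and all integers p ≥ 2 and k ≥ 1, the number of k-tuples (α_1, …, α_k) of integers with 1 ≤ α_i ≤ p for all i and α_1·α_2·…·α_k ≤ C is at most C·(1 + log p)^{k−1}. -/
open Finset

private lemma harmonic_sum_le (p : ℕ) :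
    ∑ a ∈ Finset.Icc 1 p, (1 / (a : ℝ)) ≤ 1 + Real.log p := by
  have h := harmonic_le_one_add_log p
  have heq : ∑ a ∈ Finset.Icc 1 p, (1 / (a : ℝ)) = (harmonic p : ℝ) := by
    rw [harmonic]
    push_cast
    rw [← Finset.Ico_add_one_right_eq_Icc, Finset.sum_Ico_eq_sum_range]
    simp [add_comm]
  linarith

private lemma count_aux (p : ℕ) (hp : 2 ≤ p) : ∀ (k : ℕ) (C : ℝ), 1 ≤ C →
    ((Finset.filter (fun α : Fin (k + 1) → ℕ => ((∏ i, α i : ℕ) : ℝ) ≤ C)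
        (Fintype.piFinset fun _ : Fin (k + 1) => Finset.Icc 1 p)).card : ℝ) ≤
      C * (1 + Real.log p) ^ k := by
  have hlog : (0 : ℝ) ≤ Real.log p := Real.log_nonneg (by exact_mod_cast hp.trans' (by norm_num))
  intro k
  induction k with
  | zero =>
    intro C hC
    simp only [pow_zero, mul_one]
    have hsub : (Finset.filter (fun α : Fin 1 → ℕ => ((∏ i, α i : ℕ) : ℝ) ≤ C)
        (Fintype.piFinset fun _ : Fin 1 => Finset.Icc 1 p)) ⊆
        Fintype.piFinset fun _ : Fin 1 => Finset.Icc 1 ⌊C⌋₊ := by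
      intro α hα
      simp only [Finset.mem_filter, Fintype.mem_piFinset, Finset.mem_Icc] at hα ⊢
      intro i
      have hi := (hα.1 i).1
      have hprod : ((α 0 : ℕ) : ℝ) ≤ C := by
        have := hα.2
        rwa [Fin.prod_univ_one] at this
      have : α 0 ≤ ⌊C⌋₊ := Nat.le_floor hprod
      have hi0 : i = 0 := Subsingleton.elim i 0
      exact ⟨hi, by rw [hi0]; exact this⟩
    calc ((Finset.filter (fun α : Fin 1 → ℕ => ((∏ i, α i : ℕ) : ℝ) ≤ C)
        (Fintype.piFinset fun _ : Fin 1 => Finset.Icc 1 p)).card : ℝ)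
        ≤ ((Fintype.piFinset fun _ : Fin 1 => Finset.Icc 1 ⌊C⌋₊).card : ℝ) := by
          exact_mod_cast Finset.card_le_card hsub
      _ = (⌊C⌋₊ : ℝ) := by
          rw [Fintype.card_piFinset]
          simp [Nat.card_Icc]
      _ ≤ C := Nat.floor_le (by linarith)
  | succ k ih =>
    intro C hC
    set T := Finset.filter (fun α : Fin (k + 2) → ℕ => ((∏ i, α i : ℕ) : ℝ) ≤ C)
        (Fintype.piFinset fun _ : Fin (k + 2) => Finset.Icc 1 p) with hT
    have hmem : ∀ g ∈ T, g 0 ∈ Finset.Icc 1 p := by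
      intro g hg
      rw [hT, Finset.mem_filter, Fintype.mem_piFinset] at hg
      exact hg.1 0
    have hcard : T.card = ∑ a ∈ Finset.Icc 1 p,
        (T.filter fun g => g 0 = a).card :=
      Finset.card_eq_sum_card_fiberwise hmem
    -- facts about members of T
    have hfact : ∀ g ∈ T, g 0 ∈ Finset.Icc 1 p ∧
        (∀ i : Fin (k + 1), Fin.tail g i ∈ Finset.Icc 1 p) ∧
        ((g 0 : ℝ) * ((∏ i, Fin.tail g i : ℕ) : ℝ) ≤ C) ∧
        (1 ≤ (∏ i, Fin.tail g i : ℕ)) := by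
      intro g hg
      rw [hT, Finset.mem_filter, Fintype.mem_piFinset] at hg
      obtain ⟨hpi, hprod⟩ := hg
      have hsplit : (∏ i, g i) = g 0 * ∏ i : Fin (k + 1), Fin.tail g i :=
        Fin.prod_univ_succ g
      refine ⟨hpi 0, fun i => hpi i.succ, ?_, ?_⟩
      · rw [hsplit] at hprod
        push_cast at hprod ⊢
        exact hprod
      · exact Finset.one_le_prod' fun i _ => (Finset.mem_Icc.mp (hpi i.succ)).1
    have hfiber : ∀ a ∈ Finset.Icc 1 p,
        ((T.filter fun g => g 0 = a).card : ℝ) ≤ C / a * (1 + Real.log p) ^ k := by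
      intro a ha
      rw [Finset.mem_Icc] at ha
      have ha0 : (0 : ℝ) < a := by exact_mod_cast ha.1.trans_lt' (by norm_num)
      by_cases hCa : (a : ℝ) ≤ C
      · -- inject fibers into (k+1)-tuples with product ≤ C / a
        have hCa1 : 1 ≤ C / a := (one_le_div ha0).mpr hCa
        have hinj : (T.filter fun g => g 0 = a).card ≤
            (Finset.filter (fun β : Fin (k + 1) → ℕ => ((∏ i, β i : ℕ) : ℝ) ≤ C / a)
              (Fintype.piFinset fun _ : Fin (k + 1) => Finset.Icc 1 p)).card := by
          apply Finset.card_le_card_of_injOn Fin.tail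
          · intro g hg
            rw [Finset.mem_coe, Finset.mem_filter] at hg
            obtain ⟨hgT, hg0⟩ := hg
            obtain ⟨-, htail, hprod, -⟩ := hfact g hgT
            rw [Finset.mem_coe, Finset.mem_filter, Fintype.mem_piFinset]
            refine ⟨htail, ?_⟩
            rw [le_div_iff₀ ha0, mul_comm]
            rw [hg0] at hprod
            exact hprod
          · intro g1 hg1 g2 hg2 htl
            simp only [Finset.coe_filter, Set.mem_setOf_eq] at hg1 hg2
            have h0 : g1 0 = g2 0 := hg1.2.trans hg2.2.symm
            calc g1 = Fin.cons (g1 0) (Fin.tail g1) := (Fin.cons_self_tail g1).symm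
              _ = Fin.cons (g2 0) (Fin.tail g2) := by rw [h0, htl]
              _ = g2 := Fin.cons_self_tail g2
        calc ((T.filter fun g => g 0 = a).card : ℝ)
            ≤ _ := by exact_mod_cast hinj
          _ ≤ C / a * (1 + Real.log p) ^ k := ih (C / a) hCa1
      · -- fiber is empty
        have hempty : (T.filter fun g => g 0 = a) = ∅ := by
          rw [Finset.filter_eq_empty_iff]
          intro g hg hg0
          obtain ⟨-, -, hprod, hone⟩ := hfact g hg
          rw [hg0] at hprod
          have : (a : ℝ) * 1 ≤ (a : ℝ) * ((∏ i, Fin.tail g i : ℕ) : ℝ) := by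
            apply mul_le_mul_of_nonneg_left _ ha0.le
            exact_mod_cast hone
          push_neg at hCa
          linarith
        rw [hempty]
        simp only [Finset.card_empty, Nat.cast_zero]
        positivity
    have hsum : ((T.card : ℕ) : ℝ) ≤
        ∑ a ∈ Finset.Icc 1 p, C / a * (1 + Real.log p) ^ k := by
      rw [hcard]
      push_cast
      exact Finset.sum_le_sum hfiber
    calc ((T.card : ℕ) : ℝ)
        ≤ ∑ a ∈ Finset.Icc 1 p, C / a * (1 + Real.log p) ^ k := hsum
      _ = C * (1 + Real.log p) ^ k * ∑ a ∈ Finset.Icc 1 p, (1 / (a : ℝ)) := by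
          rw [Finset.mul_sum]
          apply Finset.sum_congr rfl
          intro a _
          ring
      _ ≤ C * (1 + Real.log p) ^ k * (1 + Real.log p) := by
          apply mul_le_mul_of_nonneg_left (harmonic_sum_le p)
          positivity
      _ = C * (1 + Real.log p) ^ (k + 1) := by ring

/-- for `C ≥ 1`, `p ≥ 2`, `k ≥ 1`, the number of `k`-tuples `(α_1, …, α_k)` of
integers with `1 ≤ α_i ≤ p` and `α_1·…·α_k ≤ C` is at most `C·(1 + log p)^{k−1}`. -/
theorem count_tuples_with_small_product
    (C : ℝ) (hC : 1 ≤ C) (p k : ℕ) (hp : 2 ≤ p) (hk : 1 ≤ k) :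
    ((Finset.filter (fun α : Fin k → ℕ => ((∏ i, α i : ℕ) : ℝ) ≤ C)
        (Fintype.piFinset fun _ : Fin k => Finset.Icc 1 p)).card : ℝ) ≤
      C * (1 + Real.log p) ^ (k - 1) := by
  obtain ⟨m, rfl⟩ : ∃ m, k = m + 1 := ⟨k - 1, (Nat.succ_pred_eq_of_pos hk).symm⟩
  simpa using count_aux p hp m C hC
end
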